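/- For any d, the identity ξ(d⁰) - ξ(d) = 2(β_l⁰ - β_u⁰)·M(d) holds, where ξ(d) = E[Y - β_l⁰·1(X ≤ d) - β_u⁰·1(X > d)]² and M(d) = E[(Y - (β_l⁰+β_u⁰)/2)(1(X ≤ d) - 1(X ≤ d⁰))]. Hence if β_l⁰ > β_u⁰ and d⁰ is the unique minimizer of ξ, then d⁰ is the unique maximizer of M. -/

import Mathlib

open MeasureTheory ProbabilityTheory

/-- the identity `ξ(d⁰) - ξ(d) = 2(β_l⁰ - β_u⁰) M(d)`, where
`ξ(d) = E[Y - β_l⁰ 1(X ≤ d) - β_u⁰ 1(X > d)]²` and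
`M(d) = E[(Y - (β_l⁰+β_u⁰)/2)(1(X ≤ d) - 1(X ≤ d⁰))]`; consequently, if `β_l⁰ > β_u⁰`
and `d⁰` is the unique minimizer of `ξ`, then `d⁰` is the unique maximizer of `M`. -/
theorem stmt2 {Ω : Type*} [MeasureSpace Ω] [IsProbabilityMeasure (ℙ : Measure Ω)]
    (X Y : Ω → ℝ) (hX : Measurable X) (hY : MemLp Y 2 ℙ)
    (βl0 βu0 d0 : ℝ) (hne : βl0 ≠ βu0) (ξ M : ℝ → ℝ)
    (hξ : ∀ d, ξ d = ∫ ω, (Y ω - (if X ω ≤ d then βl0 else βu0)) ^ 2 ∂ℙ)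
    (hM : ∀ d, M d = ∫ ω, (Y ω - (βl0 + βu0) / 2)
        * ((if X ω ≤ d then (1 : ℝ) else 0) - (if X ω ≤ d0 then (1 : ℝ) else 0)) ∂ℙ) :
    (∀ d, ξ d0 - ξ d = 2 * (βl0 - βu0) * M d) ∧
    ((βu0 < βl0 ∧ ∀ d, d ≠ d0 → ξ d0 < ξ d) → ∀ d, d ≠ d0 → M d < M d0) := by
  have hc : ∀ d : ℝ, MemLp (fun ω => (if X ω ≤ d then βl0 else βu0)) 2 ℙ := by
    intro d
    have hm : Measurable fun ω => (if X ω ≤ d then βl0 else βu0) :=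
      Measurable.ite (hX measurableSet_Iic) measurable_const measurable_const
    refine (memLp_top_of_bound hm.aestronglyMeasurable (|βl0| + |βu0|)
      ?_).mono_exponent le_top
    filter_upwards with ω
    by_cases h : X ω ≤ d <;> simp only [h, if_true, if_false, Real.norm_eq_abs]
    · exact le_add_of_nonneg_right (abs_nonneg _)
    · exact le_add_of_nonneg_left (abs_nonneg _)
  have hint : ∀ d : ℝ, Integrable (fun ω => (Y ω - (if X ω ≤ d then βl0 else βu0)) ^ 2) ℙ :=
    fun d => (hY.sub (hc d)).integrable_sq
  have key : ∀ d, ξ d0 - ξ d = 2 * (βl0 - βu0) * M d := by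
    intro d
    rw [hξ, hξ, hM, ← integral_sub (hint d0) (hint d), ← integral_const_mul]
    refine integral_congr_ae (Filter.Eventually.of_forall fun ω => ?_)
    by_cases h1 : X ω ≤ d0 <;> by_cases h2 : X ω ≤ d <;>
      simp only [h1, h2, if_true, if_false] <;> ring
  refine ⟨key, ?_⟩
  rintro ⟨hlt, hmin⟩ d hd
  have hM0 : M d0 = 0 := by rw [hM]; simp
  have hk := key d
  nlinarith [hmin d hd]
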